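/- Let ε ∈ (0, 1/2] and let d ≥ 1 be an integer. Let (V, r, par) be a finite rooted tree in which every node has at most d children, with capacities B : V → ℕ, and let (A_v)_{v ∈ V} be mutually independent ℕ-valued random variables on a probability space such that E[exp(ε(A_v − B_v))] ≤ ε²/(e·d) for every v ∈ V. Then for every node v ∈ V, the probability that L_v(A) ≥ B_v is at most ε. -/

import Mathlib

open MeasureTheory ProbabilityTheory
open scoped ENNReal

variable {V : Type*} [Fintype V] [DecidableEq V]

/-- The children of `v` in the rooted tree with parent map `par` (the root is encoded by
`par r = r`, so it is not a child of itself). -/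
def children (par : V → V) (v : V) : Finset V :=
  Finset.univ.filter (fun u => par u = v ∧ u ≠ v)

/-- Fuel-indexed auxiliary recursion computing the forwarded counts
`F_v(a) = max(a_v + Σ_{u child of v} F_u(a) − B_v, 0)` (truncated `ℕ` subtraction realizes
the `max(· , 0)`).  In a finite rooted tree every branch has length less than `card V`, so
fuel `card V` computes the structurally recursive value at every node. -/
def forwardAux (par : V → V) (B a : V → ℕ) : ℕ → V → ℕ
  | 0, v => a v - B v
  | n + 1, v => a v + (∑ u ∈ children par v, forwardAux par B a n u) - B v

/-- The forwarded count `F_v(a)` at node `v`. -/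
def forwardF (par : V → V) (B a : V → ℕ) (v : V) : ℕ :=
  forwardAux par B a (Fintype.card V) v

/-- The load `L_v(a) = a_v + Σ_{u child of v} F_u(a)` at node `v`. -/
def load (par : V → V) (B a : V → ℕ) (v : V) : ℕ :=
  a v + ∑ u ∈ children par v, forwardF par B a u

private lemma mem_children_iff {par : V → V} {u v : V} :
    u ∈ children par v ↔ par u = v ∧ u ≠ v := by
  simp [children]

private lemma find_lt_card (par : V → V) {w v : V} (h : ∃ k, par^[k] w = v) :
    Nat.find h < Fintype.card V := by
  have hinj : Function.Injective (fun i : Fin (Nat.find h + 1) => par^[(i : ℕ)] w) := by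
    have key : ∀ i j : ℕ, i < j → j ≤ Nat.find h → par^[i] w ≠ par^[j] w := by
      intro i j hij hj hne
      have h1 : par^[Nat.find h - j + i] w = v := by
        have : par^[Nat.find h - j] (par^[i] w) = par^[Nat.find h - j] (par^[j] w) := by
          rw [hne]
        rw [← Function.iterate_add_apply, ← Function.iterate_add_apply] at this
        have h2 : Nat.find h - j + j = Nat.find h := Nat.sub_add_cancel hj
        rw [h2] at this
        rw [this, Nat.find_spec h]
      exact Nat.find_min h (by omega) h1
    intro i j hij
    by_contra hne
    rcases lt_or_gt_of_ne (fun hc : (i : ℕ) = (j : ℕ) => hne (Fin.ext hc)) with hlt | hlt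
    · exact key i j hlt (by omega) hij
    · exact key j i hlt (by omega) hij.symm
  have := Fintype.card_le_of_injective _ hinj
  rw [Fintype.card_fin] at this
  omega

/-- depth of a node: distance to the root. -/
private def dp (par : V → V) (r : V) (hreach : ∀ v, ∃ n, par^[n] v = r) (v : V) : ℕ :=
  Nat.find (hreach v)

private lemma dp_spec (par : V → V) (r : V) (hreach : ∀ v, ∃ n, par^[n] v = r) (v : V) :
    par^[dp par r hreach v] v = r := Nat.find_spec (hreach v)

private lemma dp_lt_card (par : V → V) (r : V) (hreach : ∀ v, ∃ n, par^[n] v = r) (v : V) :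
    dp par r hreach v < Fintype.card V := find_lt_card par (hreach v)

private lemma dp_eq_zero (par : V → V) (r : V) (hreach : ∀ v, ∃ n, par^[n] v = r) {v : V}
    (h : dp par r hreach v = 0) : v = r := by
  have := dp_spec par r hreach v
  rwa [h] at this

private lemma par_ne_self (par : V → V) (r : V) (hreach : ∀ v, ∃ n, par^[n] v = r) {w : V}
    (hw : w ≠ r) : par w ≠ w := by
  intro h
  obtain ⟨n, hn⟩ := hreach w
  have hfix : ∀ m, par^[m] w = w := by
    intro m
    induction m with
    | zero => rfl
    | succ m ih => rw [Function.iterate_succ_apply, h, ih]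
  exact hw ((hfix n) ▸ hn)

private lemma child_ne_root {par : V → V} {r : V} (hroot : par r = r) {u v : V}
    (hu : u ∈ children par v) : u ≠ r := by
  rcases mem_children_iff.1 hu with ⟨hp, hne⟩
  intro h
  subst h
  rw [hroot] at hp
  exact hne hp

private lemma dp_child (par : V → V) (r : V) (hroot : par r = r)
    (hreach : ∀ v, ∃ n, par^[n] v = r) {u v : V} (hu : u ∈ children par v) :
    dp par r hreach u = dp par r hreach v + 1 := by
  rcases mem_children_iff.1 hu with ⟨hp, hne⟩
  have hle : dp par r hreach u ≤ dp par r hreach v + 1 := by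
    apply Nat.find_le
    rw [Function.iterate_succ_apply, hp]
    exact dp_spec par r hreach v
  have hge : dp par r hreach v + 1 ≤ dp par r hreach u := by
    have hur : u ≠ r := child_ne_root hroot hu
    have h0 : dp par r hreach u ≠ 0 := fun h => hur (dp_eq_zero par r hreach h)
    obtain ⟨m, hm⟩ : ∃ m, dp par r hreach u = m + 1 := ⟨_, (Nat.succ_pred_eq_of_pos (Nat.pos_of_ne_zero h0)).symm⟩
    have : par^[m] v = r := by
      have := dp_spec par r hreach u
      rw [hm, Function.iterate_succ_apply, hp] at this
      exact this
    have hle2 : dp par r hreach v ≤ m := Nat.find_le this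
    simp only [dp] at *
    omega
  omega

private lemma iterate_root (par : V → V) (r : V) (hroot : par r = r) (n : ℕ) :
    par^[n] r = r := Function.iterate_fixed hroot n

private lemma dp_iterate (par : V → V) (r : V) (hroot : par r = r)
    (hreach : ∀ v, ∃ n, par^[n] v = r) :
    ∀ (k : ℕ) (w u : V), par^[k] w = u → u ≠ r →
      dp par r hreach w = dp par r hreach u + k := by
  intro k
  induction k with
  | zero => intro w u h _; simp [← h]
  | succ k ih =>
    intro w u h hur
    have hwr : w ≠ r := by
      intro hw
      rw [hw] at h
      exact hur (by rw [← h, iterate_root par r hroot])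
    have hchild : w ∈ children par (par w) :=
      mem_children_iff.2 ⟨rfl, fun hc => par_ne_self par r hreach hwr hc.symm⟩
    have h1 : par^[k] (par w) = u := by rwa [← Function.iterate_succ_apply]
    have := ih (par w) u h1 hur
    rw [dp_child par r hroot hreach hchild, this]
    omega

/-- the subtree rooted at `v`. -/
private def subt (par : V → V) (v : V) : Finset V :=
  Finset.univ.filter
    (fun w => v ∈ (Finset.range (Fintype.card V + 1)).image (fun k => par^[k] w))

private lemma mem_subt {par : V → V} {v w : V} :
    w ∈ subt par v ↔ ∃ k, par^[k] w = v := by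
  constructor
  · intro h
    simp only [subt, Finset.mem_filter, Finset.mem_image, Finset.mem_range] at h
    obtain ⟨-, k, -, hk⟩ := h
    exact ⟨k, hk⟩
  · intro h
    simp only [subt, Finset.mem_filter, Finset.mem_image, Finset.mem_range]
    exact ⟨Finset.mem_univ _, Nat.find h, by have := find_lt_card par h; omega, Nat.find_spec h⟩

private lemma subt_self {par : V → V} (v : V) : v ∈ subt par v :=
  mem_subt.2 ⟨0, rfl⟩

private lemma children_mem_subt {par : V → V} {v w u : V} (hw : w ∈ subt par v)
    (hu : u ∈ children par w) : u ∈ subt par v := by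
  obtain ⟨k, hk⟩ := mem_subt.1 hw
  rcases mem_children_iff.1 hu with ⟨hp, -⟩
  exact mem_subt.2 ⟨k + 1, by rw [Function.iterate_succ_apply, hp, hk]⟩

private lemma subt_subset {par : V → V} {v u : V} (hu : u ∈ children par v) :
    subt par u ⊆ subt par v := by
  intro w hw
  obtain ⟨k, hk⟩ := mem_subt.1 hw
  rcases mem_children_iff.1 hu with ⟨hp, -⟩
  refine mem_subt.2 ⟨k + 1, ?_⟩
  rw [Function.iterate_succ_apply', hk, hp]

private lemma subt_disjoint (par : V → V) (r : V) (hroot : par r = r)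
    (hreach : ∀ v, ∃ n, par^[n] v = r) {v u₁ u₂ : V} (h₁ : u₁ ∈ children par v)
    (h₂ : u₂ ∈ children par v) (hne : u₁ ≠ u₂) :
    Disjoint (subt par u₁) (subt par u₂) := by
  rw [Finset.disjoint_left]
  intro w hw₁ hw₂
  obtain ⟨k₁, hk₁⟩ := mem_subt.1 hw₁
  obtain ⟨k₂, hk₂⟩ := mem_subt.1 hw₂
  have e₁ := dp_iterate par r hroot hreach k₁ w u₁ hk₁ (child_ne_root hroot h₁)
  have e₂ := dp_iterate par r hroot hreach k₂ w u₂ hk₂ (child_ne_root hroot h₂)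
  have d₁ := dp_child par r hroot hreach h₁
  have d₂ := dp_child par r hroot hreach h₂
  have : k₁ = k₂ := by omega
  subst this
  exact hne (hk₁ ▸ hk₂ ▸ rfl)

private lemma not_mem_subt (par : V → V) (r : V) (hroot : par r = r)
    (hreach : ∀ v, ∃ n, par^[n] v = r) {v u : V} (hu : u ∈ children par v) :
    v ∉ subt par u := by
  intro hv
  obtain ⟨k, hk⟩ := mem_subt.1 hv
  have := dp_iterate par r hroot hreach k v u hk (child_ne_root hroot hu)
  have := dp_child par r hroot hreach hu
  omega

private lemma forwardAux_congr (par : V → V) (B : V → ℕ) {a a' : V → ℕ} :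
    ∀ (n : ℕ) (w : V), (∀ x ∈ subt par w, a x = a' x) →
      forwardAux par B a n w = forwardAux par B a' n w := by
  intro n
  induction n with
  | zero => intro w h; simp [forwardAux, h w (subt_self w)]
  | succ n ih =>
    intro w h
    simp only [forwardAux]
    rw [h w (subt_self w)]
    congr 2
    apply Finset.sum_congr rfl
    intro u hu
    exact ih u (fun x hx => h x (subt_subset hu hx))

private lemma forwardAux_stab (par : V → V) (r : V) (hroot : par r = r)
    (hreach : ∀ v, ∃ n, par^[n] v = r) (B a : V → ℕ) :
    ∀ (n m : ℕ) (v : V), Fintype.card V ≤ n + dp par r hreach v →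
      Fintype.card V ≤ m + dp par r hreach v →
      forwardAux par B a n v = forwardAux par B a m v := by
  intro n
  induction n with
  | zero =>
    intro m v hn _
    have := dp_lt_card par r hreach v
    omega
  | succ n ih =>
    intro m v hn hm
    match m with
    | 0 =>
      have := dp_lt_card par r hreach v
      omega
    | m + 1 =>
      simp only [forwardAux]
      congr 2
      apply Finset.sum_congr rfl
      intro u hu
      have hd := dp_child par r hroot hreach hu
      exact ih m u (by omega) (by omega)

private lemma forwardF_eq (par : V → V) (r : V) (hroot : par r = r)
    (hreach : ∀ v, ∃ n, par^[n] v = r) (B a : V → ℕ) (v : V) :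
    forwardF par B a v = load par B a v - B v := by
  have hc : 0 < Fintype.card V := Fintype.card_pos_iff.2 ⟨r⟩
  obtain ⟨c, hcV⟩ : ∃ c, Fintype.card V = c + 1 := ⟨_, (Nat.succ_pred_eq_of_pos hc).symm⟩
  unfold forwardF load
  rw [hcV]
  simp only [forwardAux]
  congr 2
  apply Finset.sum_congr rfl
  intro u hu
  have hd := dp_child par r hroot hreach hu
  have hdv := dp_lt_card par r hreach v
  exact forwardAux_stab par r hroot hreach B a c (Fintype.card V) u (by omega)
    (by have := dp_lt_card par r hreach u; omega)

private lemma forwardF_congr (par : V → V) (B : V → ℕ) {a a' : V → ℕ} (v : V)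
    (h : ∀ x ∈ subt par v, a x = a' x) :
    forwardF par B a v = forwardF par B a' v :=
  forwardAux_congr par B _ v h

private lemma lintegral_prod_of_local
    {Ω : Type*} [MeasurableSpace Ω] (μ : Measure Ω) [IsProbabilityMeasure μ]
    (A : V → Ω → ℕ) (hAmeas : ∀ v, Measurable (A v))
    (hindep : iIndepFun A μ)
    (S : V → Finset V) (Φ : V → (V → ℕ) → ℝ≥0∞) (t : Finset V) :
    (t : Set V).Pairwise (fun i j => Disjoint (S i) (S j)) →
    (∀ i ∈ t, ∀ a a' : V → ℕ, (∀ x ∈ S i, a x = a' x) → Φ i a = Φ i a') →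
    ∫⁻ ω, ∏ i ∈ t, Φ i (fun w => A w ω) ∂μ = ∏ i ∈ t, ∫⁻ ω, Φ i (fun w => A w ω) ∂μ := by
  induction t using Finset.induction_on with
  | empty => intro _ _; simp
  | @insert i t hi ih =>
    intro hdisj hloc
    have hloc' : ∀ j ∈ t, ∀ a a' : V → ℕ, (∀ x ∈ S j, a x = a' x) → Φ j a = Φ j a' :=
      fun j hj => hloc j (Finset.mem_insert_of_mem hj)
    have hdisj' : (t : Set V).Pairwise (fun i j => Disjoint (S i) (S j)) :=
      hdisj.mono (by rw [Finset.coe_insert]; exact Set.subset_insert _ _)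
    set T : Finset V := t.biUnion S with hT
    set f : Ω → ℝ≥0∞ := fun ω => Φ i (fun w => A w ω) with hfdef
    set g : Ω → ℝ≥0∞ := fun ω => ∏ j ∈ t, Φ j (fun w => A w ω) with hgdef
    set φ : (↥(S i) → ℕ) → ℝ≥0∞ :=
      fun y => Φ i (fun w => if h : w ∈ S i then y ⟨w, h⟩ else 0) with hφdef
    set ψ : (↥T → ℕ) → ℝ≥0∞ :=
      fun y => ∏ j ∈ t, Φ j (fun w => if h : w ∈ T then y ⟨w, h⟩ else 0) with hψdef
    have hf : f = φ ∘ (fun ω (x : S i) => A x ω) := by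
      funext ω
      exact hloc i (Finset.mem_insert_self i t) _ _ (fun x hx => by simp [hx])
    have hg : g = ψ ∘ (fun ω (x : T) => A x ω) := by
      funext ω
      refine Finset.prod_congr rfl (fun j hj => ?_)
      refine hloc' j hj _ _ (fun x hx => ?_)
      have hxT : x ∈ T := Finset.mem_biUnion.2 ⟨j, hj, hx⟩
      simp [hxT]
    have hST : Disjoint (S i) T := by
      rw [hT, Finset.disjoint_biUnion_right]
      intro j hj
      exact hdisj (Finset.mem_insert_self i t) (Finset.mem_insert_of_mem hj)
        (fun h => hi (h ▸ hj))
    have hind : IndepFun f g μ := by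
      rw [hf, hg]
      exact ((hindep.indepFun_finset (S i) T hST hAmeas).comp
        (measurable_of_countable φ) (measurable_of_countable ψ))
    have hfm : Measurable f := by
      rw [hf]
      exact (measurable_of_countable φ).comp (measurable_pi_lambda _ (fun x => hAmeas x))
    have hgm : Measurable g := by
      rw [hg]
      exact (measurable_of_countable ψ).comp (measurable_pi_lambda _ (fun x => hAmeas x))
    calc ∫⁻ ω, ∏ j ∈ insert i t, Φ j (fun w => A w ω) ∂μ
        = ∫⁻ ω, f ω * g ω ∂μ := by
          apply lintegral_congr
          intro ω
          rw [Finset.prod_insert hi]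
      _ = (∫⁻ ω, f ω ∂μ) * ∫⁻ ω, g ω ∂μ :=
          lintegral_mul_eq_lintegral_mul_lintegral_of_indepFun'' hfm.aemeasurable
            hgm.aemeasurable hind
      _ = ∏ j ∈ insert i t, ∫⁻ ω, Φ j (fun w => A w ω) ∂μ := by
          rw [Finset.prod_insert hi, ← ih hdisj' hloc']

private lemma real_ineq (ε : ℝ) (hε0 : 0 < ε) (hε : ε ≤ 1 / 2) (d : ℕ) (hd : 1 ≤ d) :
    ε ^ 2 / (Real.exp 1 * d) * (1 + ε / d) ^ d ≤ ε / d := by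
  have hd0 : (0 : ℝ) < d := by exact_mod_cast Nat.lt_of_lt_of_le Nat.zero_lt_one hd
  have h1 : (1 + ε / d) ^ d ≤ Real.exp ε := by
    have hle : (1 + ε / d) ≤ Real.exp (ε / d) := by
      have := Real.add_one_le_exp (ε / d); linarith
    calc (1 + ε / d) ^ d ≤ (Real.exp (ε / d)) ^ d := pow_le_pow_left₀ (by positivity) hle d
      _ = Real.exp ε := by rw [← Real.exp_nat_mul]; congr 1; field_simp
  have h2 : ε * Real.exp ε ≤ Real.exp 1 :=
    calc ε * Real.exp ε ≤ 1 * Real.exp 1 := by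
          apply mul_le_mul (by linarith) (Real.exp_le_exp.2 (by linarith))
            (Real.exp_pos _).le one_pos.le
      _ = Real.exp 1 := one_mul _
  calc ε ^ 2 / (Real.exp 1 * d) * (1 + ε / d) ^ d
      ≤ ε ^ 2 / (Real.exp 1 * d) * Real.exp ε := by
        apply mul_le_mul_of_nonneg_left h1 (by positivity)
    _ ≤ ε / d := by
        rw [div_mul_eq_mul_div, div_le_div_iff₀ (by positivity) hd0]
        nlinarith [mul_le_mul_of_nonneg_left h2 (mul_pos hε0 hd0).le, Real.exp_pos 1]


/-- Let `ε ∈ (0, 1/2]`, `d ≥ 1`, and let `(V, r, par)` be a finite rooted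
tree in which every node has at most `d` children, with capacities `B`.  If
`(A_v)_{v ∈ V}` are mutually independent `ℕ`-valued random variables with
`E[exp(ε(A_v − B_v))] ≤ ε²/(e·d)` for all `v`, then for every node `v` the probability
that `L_v(A) ≥ B_v` is at most `ε`. -/
theorem tree_overload_prob_le
    {Ω : Type*} [MeasurableSpace Ω] (μ : Measure Ω) [IsProbabilityMeasure μ]
    (ε : ℝ) (hε0 : 0 < ε) (hε : ε ≤ 1 / 2) (d : ℕ) (hd : 1 ≤ d)
    (r : V) (par : V → V) (hroot : par r = r)
    (hreach : ∀ v, ∃ n, par^[n] v = r)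
    (hdeg : ∀ v, (children par v).card ≤ d)
    (B : V → ℕ)
    (A : V → Ω → ℕ) (hAmeas : ∀ v, Measurable (A v))
    (hindep : iIndepFun A μ)
    (hmgf : ∀ v, ∫⁻ ω, ENNReal.ofReal (Real.exp (ε * ((A v ω : ℝ) - (B v : ℝ)))) ∂μ ≤
      ENNReal.ofReal (ε ^ 2 / (Real.exp 1 * d))) :
    ∀ v, μ {ω | B v ≤ load par B (fun i => A i ω) v} ≤ ENNReal.ofReal ε := by
  classical
  have hd0 : (0 : ℝ) < d := by exact_mod_cast Nat.lt_of_lt_of_le Nat.zero_lt_one hd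
  have hApi : Measurable (fun ω => (fun i => A i ω)) := measurable_pi_lambda _ hAmeas
  set H : V → Ω → ℝ≥0∞ := fun v ω =>
    ENNReal.ofReal (Real.exp (ε * ((load par B (fun i => A i ω) v : ℝ) - (B v : ℝ))))
    with hHdef
  set G : V → Ω → ℝ≥0∞ := fun v ω =>
    ENNReal.ofReal (Real.exp (ε * (forwardF par B (fun i => A i ω) v : ℝ))) with hGdef
  have hHmeas : ∀ v, Measurable (H v) := fun v =>
    (measurable_of_countable (fun a : V → ℕ =>
      ENNReal.ofReal (Real.exp (ε * ((load par B a v : ℝ) - (B v : ℝ)))))).comp hApi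
  have hGmeas : ∀ v, Measurable (G v) := fun v =>
    (measurable_of_countable (fun a : V → ℕ =>
      ENNReal.ofReal (Real.exp (ε * (forwardF par B a v : ℝ))))).comp hApi
  -- factorization of the mgf of the load via independence
  have hfact : ∀ v, ∫⁻ ω, H v ω ∂μ =
      (∫⁻ ω, ENNReal.ofReal (Real.exp (ε * ((A v ω : ℝ) - (B v : ℝ)))) ∂μ) *
        ∏ u ∈ children par v, ∫⁻ ω, G u ω ∂μ := by
    intro v
    set S : V → Finset V := fun i => if i = v then {v} else subt par i with hSdef
    set Φ : V → (V → ℕ) → ℝ≥0∞ := fun i a =>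
      if i = v then ENNReal.ofReal (Real.exp (ε * ((a v : ℝ) - (B v : ℝ))))
      else ENNReal.ofReal (Real.exp (ε * (forwardF par B a i : ℝ))) with hΦdef
    have hchild_ne : ∀ u, u ∈ children par v → u ≠ v := fun u hu => (mem_children_iff.1 hu).2
    have hvnc : v ∉ children par v := fun h => hchild_ne v h rfl
    have hdisj : ((insert v (children par v) : Finset V) : Set V).Pairwise
        (fun i j => Disjoint (S i) (S j)) := by
      intro i hi j hj hij
      simp only [Finset.coe_insert, Set.mem_insert_iff, Finset.mem_coe] at hi hj
      rcases hi with rfl | hi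
      · rcases hj with rfl | hj
        · exact absurd rfl hij
        · simp only [hSdef, if_pos rfl, if_neg (hchild_ne j hj)]
          exact Finset.disjoint_singleton_left.2 (not_mem_subt par r hroot hreach hj)
      · rcases hj with rfl | hj
        · simp only [hSdef, if_pos rfl, if_neg (hchild_ne i hi)]
          exact (Finset.disjoint_singleton_left.2 (not_mem_subt par r hroot hreach hi)).symm
        · simp only [hSdef, if_neg (hchild_ne i hi), if_neg (hchild_ne j hj)]
          exact subt_disjoint par r hroot hreach hi hj hij
    have hloc : ∀ i ∈ insert v (children par v), ∀ a a' : V → ℕ,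
        (∀ x ∈ S i, a x = a' x) → Φ i a = Φ i a' := by
      intro i _ a a' hx
      by_cases h : i = v
      · subst h
        simp only [hSdef, if_pos rfl] at hx
        simp only [hΦdef, if_pos rfl, hx i (Finset.mem_singleton_self i)]
      · simp only [hSdef, if_neg h] at hx
        simp only [hΦdef, if_neg h, forwardF_congr par B i hx]
    have heq := lintegral_prod_of_local μ A hAmeas hindep S Φ
      (insert v (children par v)) hdisj hloc
    have hpt : ∀ ω, ∏ i ∈ insert v (children par v), Φ i (fun w => A w ω) = H v ω := by
      intro ω
      rw [Finset.prod_insert hvnc]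
      have h1 : ∀ u ∈ children par v, Φ u (fun w => A w ω) =
          ENNReal.ofReal (Real.exp (ε * (forwardF par B (fun w => A w ω) u : ℝ))) :=
        fun u hu => by simp only [hΦdef, if_neg (hchild_ne u hu)]
      rw [Finset.prod_congr rfl h1]
      simp only [hΦdef, if_pos rfl, hHdef]
      rw [← ENNReal.ofReal_prod_of_nonneg (fun _ _ => (Real.exp_pos _).le),
        ← ENNReal.ofReal_mul (Real.exp_pos _).le, ← Real.exp_sum, ← Real.exp_add]
      have hexp : ∀ x ∈ children par v, ε * (forwardF par B (fun w => A w ω) x : ℝ) =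
          ε * (forwardF par B (fun w => A w ω) x : ℝ) := fun _ _ => rfl
      congr 1
      rw [Finset.sum_congr rfl hexp, show ∀ s : Finset V, ∀ f : V → ℝ,
        ∑ x ∈ s, ε * f x = ε * ∑ x ∈ s, f x from fun s f => by rw [Finset.mul_sum]]
      simp only [load]
      push_cast
      ring
    calc ∫⁻ ω, H v ω ∂μ
        = ∫⁻ ω, ∏ i ∈ insert v (children par v), Φ i (fun w => A w ω) ∂μ :=
          lintegral_congr (fun ω => (hpt ω).symm)
      _ = ∏ i ∈ insert v (children par v), ∫⁻ ω, Φ i (fun w => A w ω) ∂μ := heq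
      _ = (∫⁻ ω, ENNReal.ofReal (Real.exp (ε * ((A v ω : ℝ) - (B v : ℝ)))) ∂μ) *
            ∏ u ∈ children par v, ∫⁻ ω, G u ω ∂μ := by
          rw [Finset.prod_insert hvnc]
          congr 1
          · apply lintegral_congr; intro ω; simp only [hΦdef, if_pos rfl]
          · apply Finset.prod_congr rfl
            intro u hu
            apply lintegral_congr; intro ω
            simp only [hΦdef, if_neg (hchild_ne u hu), hGdef]
  -- pointwise bound G ≤ 1 + H
  have hGH : ∀ v ω, G v ω ≤ 1 + H v ω := by
    intro v ω
    simp only [hGdef, hHdef, forwardF_eq par r hroot hreach B (fun i => A i ω) v]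
    by_cases h : B v ≤ load par B (fun i => A i ω) v
    · rw [Nat.cast_sub h]
      exact le_add_self
    · rw [Nat.sub_eq_zero_of_le (le_of_not_ge h)]
      simp only [Nat.cast_zero, mul_zero, Real.exp_zero, ENNReal.ofReal_one]
      exact le_add_right le_rfl
  -- main induction on depth deficit
  have key : ∀ n (v : V), Fintype.card V ≤ n + dp par r hreach v →
      ∫⁻ ω, H v ω ∂μ ≤ ENNReal.ofReal (ε / d) := by
    intro n
    induction n with
    | zero =>
      intro v hv
      have := dp_lt_card par r hreach v
      omega
    | succ n ih =>
      intro v hv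
      have hεd : (0 : ℝ) ≤ ε / d := div_nonneg hε0.le hd0.le
      have hGu : ∀ u ∈ children par v, ∫⁻ ω, G u ω ∂μ ≤ ENNReal.ofReal (1 + ε / d) := by
        intro u hu
        have hdu := dp_child par r hroot hreach hu
        calc ∫⁻ ω, G u ω ∂μ ≤ ∫⁻ ω, 1 + H u ω ∂μ := lintegral_mono (hGH u)
          _ = 1 + ∫⁻ ω, H u ω ∂μ := by
              rw [lintegral_add_left measurable_const, lintegral_one, measure_univ]
          _ ≤ 1 + ENNReal.ofReal (ε / d) := add_le_add (le_refl 1) (ih u (by omega))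
          _ = ENNReal.ofReal (1 + ε / d) := by
              rw [ENNReal.ofReal_add zero_le_one hεd, ENNReal.ofReal_one]
      have hone : (1 : ℝ≥0∞) ≤ ENNReal.ofReal (1 + ε / d) :=
        ENNReal.one_le_ofReal.2 (by linarith)
      calc ∫⁻ ω, H v ω ∂μ
          = (∫⁻ ω, ENNReal.ofReal (Real.exp (ε * ((A v ω : ℝ) - (B v : ℝ)))) ∂μ) *
              ∏ u ∈ children par v, ∫⁻ ω, G u ω ∂μ := hfact v
        _ ≤ ENNReal.ofReal (ε ^ 2 / (Real.exp 1 * d)) *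
              ∏ u ∈ children par v, ENNReal.ofReal (1 + ε / d) :=
            mul_le_mul' (hmgf v) (Finset.prod_le_prod' hGu)
        _ = ENNReal.ofReal (ε ^ 2 / (Real.exp 1 * d)) *
              ENNReal.ofReal (1 + ε / d) ^ (children par v).card := by
            rw [Finset.prod_const]
        _ ≤ ENNReal.ofReal (ε ^ 2 / (Real.exp 1 * d)) * ENNReal.ofReal (1 + ε / d) ^ d :=
            mul_le_mul' le_rfl (pow_le_pow_right₀ hone (hdeg v))
        _ = ENNReal.ofReal (ε ^ 2 / (Real.exp 1 * d) * (1 + ε / d) ^ d) := by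
            rw [← ENNReal.ofReal_pow (by linarith), ← ENNReal.ofReal_mul (by positivity)]
        _ ≤ ENNReal.ofReal (ε / d) :=
            ENNReal.ofReal_le_ofReal (real_ineq ε hε0 hε d hd)
  -- conclusion via Markov
  intro v
  have hsm : MeasurableSet {ω | B v ≤ load par B (fun i => A i ω) v} := by
    have hm : Measurable (fun ω => load par B (fun i => A i ω) v) :=
      (measurable_of_countable (fun a : V → ℕ => load par B a v)).comp hApi
    exact hm (MeasurableSet.of_discrete)
  calc μ {ω | B v ≤ load par B (fun i => A i ω) v}
      = ∫⁻ _ω in {ω | B v ≤ load par B (fun i => A i ω) v}, 1 ∂μ :=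
        (setLIntegral_one _).symm
    _ ≤ ∫⁻ ω in {ω | B v ≤ load par B (fun i => A i ω) v}, H v ω ∂μ := by
        apply setLIntegral_mono (hHmeas v)
        intro ω hω
        simp only [Set.mem_setOf_eq] at hω
        refine ENNReal.one_le_ofReal.2 (Real.one_le_exp ?_)
        have hle : (B v : ℝ) ≤ (load par B (fun i => A i ω) v : ℝ) := by exact_mod_cast hω
        exact mul_nonneg hε0.le (by linarith)
    _ ≤ ∫⁻ ω, H v ω ∂μ := setLIntegral_le_lintegral _ _
    _ ≤ ENNReal.ofReal (ε / d) := key (Fintype.card V) v (Nat.le_add_right _ _)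
    _ ≤ ENNReal.ofReal ε := ENNReal.ofReal_le_ofReal (by
        rw [div_le_iff₀ hd0]
        have h1d : (1 : ℝ) ≤ d := by exact_mod_cast hd
        nlinarith)
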